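/- Let (X, E) be a connected coarse space, z ∈ X a fixed point, and A(X) the free abelian group of exponent p on X. The family of sets Y_{n,ε} + {0, z, 2z, ..., (p−1)z}, for n < ω and symmetric ε ∈ E, is a base for a group ideal I on A(X): it is closed under downward inclusion up to members, B − C ∈ I for all B, C ∈ I, and every finite subset of A(X) belongs to I. -/

import Mathlib

/-- A coarse structure on `X`. -/
def IsCoarseStructure {X : Type*} (E : Set (Set (X × X))) : Prop :=
  (∀ ε ∈ E, ∀ x : X, (x, x) ∈ ε) ∧
  (∀ ε ∈ E, ∀ δ ∈ E, {p : X × X | ∃ z : X, (p.1, z) ∈ ε ∧ (z, p.2) ∈ δ} ∈ E) ∧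
  (∀ ε ∈ E, {p : X × X | (p.2, p.1) ∈ ε} ∈ E) ∧
  (∀ ε ∈ E, ∀ ε' ⊆ ε, (∀ x : X, (x, x) ∈ ε') → ε' ∈ E)

/-- Connectedness: any two points are related by some entourage. -/
def IsConnectedCoarse {X : Type*} (E : Set (Set (X × X))) : Prop :=
  ∀ x y : X, ∃ ε ∈ E, (x, y) ∈ ε

/-- The `n`-fold sumset of `S` in an additive commutative group. -/
def nSumset {A : Type*} [AddCommGroup A] (S : Set A) (n : ℕ) : Set A :=
  {a | ∃ f : Fin n → A, (∀ i, f i ∈ S) ∧ a = ∑ i, f i}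

/-- The set `Y_ε = {x − y : (x, y) ∈ ε}` of differences of generators of the free
abelian group `A(X) = ⊕_{x ∈ X} ℤ/p` of exponent `p` on `X`. -/
def Yset {X : Type*} (p : ℕ) (ε : Set (X × X)) : Set (X →₀ ZMod p) :=
  {a | ∃ q ∈ ε, a = Finsupp.single q.1 (1 : ZMod p) - Finsupp.single q.2 (1 : ZMod p)}

/-- The coefficient-sum homomorphism `A(X) → ℤ/p`. -/
noncomputable def coeffSum (X : Type*) (p : ℕ) : (X →₀ ZMod p) →+ ZMod p :=
  Finsupp.liftAddHom fun _ : X => AddMonoidHom.id (ZMod p)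

/-- A group ideal on an additive group: closed under subsets and finite unions,
contains all finite sets, and `B − C` belongs to it for members `B, C`. -/
def IsAddGroupIdeal {A : Type*} [AddGroup A] (I : Set (Set A)) : Prop :=
  (∀ B ∈ I, ∀ C ⊆ B, C ∈ I) ∧
  (∀ B ∈ I, ∀ C ∈ I, B ∪ C ∈ I) ∧
  (∀ B : Set A, B.Finite → B ∈ I) ∧
  (∀ B ∈ I, ∀ C ∈ I, {a : A | ∃ b ∈ B, ∃ c ∈ C, a = b - c} ∈ I)

/- ### Auxiliary lemmas -/

lemma nSumset_mono' {A : Type*} [AddCommGroup A] {S T : Set A} (h : S ⊆ T) (n : ℕ) :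
    nSumset S n ⊆ nSumset T n := by
  rintro a ⟨f, hf, rfl⟩; exact ⟨f, fun i => h (hf i), rfl⟩

lemma add_mem_nSumset' {A : Type*} [AddCommGroup A] {S : Set A} {n m : ℕ} {a b : A}
    (ha : a ∈ nSumset S n) (hb : b ∈ nSumset S m) : a + b ∈ nSumset S (n + m) := by
  obtain ⟨f, hf, rfl⟩ := ha; obtain ⟨g, hg, rfl⟩ := hb
  refine ⟨Fin.append f g, fun i => ?_, ?_⟩
  · induction i using Fin.addCases with
    | left i => rw [Fin.append_left]; exact hf i
    | right i => rw [Fin.append_right]; exact hg i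
  · rw [Fin.sum_univ_add]; simp [Fin.append_left, Fin.append_right]

lemma zero_mem_nSumset' {A : Type*} [AddCommGroup A] {S : Set A} (h : (0:A) ∈ S) (n : ℕ) :
    (0:A) ∈ nSumset S n := ⟨fun _ => 0, fun _ => h, by simp⟩

lemma smul_mem_nSumset' {A : Type*} [AddCommGroup A] {S : Set A} {v : A} (hv : v ∈ S) (n : ℕ) :
    n • v ∈ nSumset S n := ⟨fun _ => v, fun _ => hv, by simp⟩

lemma neg_mem_nSumset' {A : Type*} [AddCommGroup A] {S : Set A} (hS : ∀ a ∈ S, -a ∈ S)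
    {n : ℕ} {a : A} (ha : a ∈ nSumset S n) : -a ∈ nSumset S n := by
  obtain ⟨f, hf, rfl⟩ := ha
  exact ⟨fun i => -(f i), fun i => hS _ (hf i), by simp⟩

lemma union_mem_coarse {X : Type*} {E : Set (Set (X × X))} (hE : IsCoarseStructure E)
    {ε ε' : Set (X × X)} (h : ε ∈ E) (h' : ε' ∈ E) : ε ∪ ε' ∈ E := by
  have hc := hE.2.1 ε h ε' h'
  refine hE.2.2.2 _ hc (ε ∪ ε') ?_ (fun x => Or.inl (hE.1 ε h x))
  rintro ⟨x, y⟩ (hx | hx)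
  · exact ⟨y, hx, hE.1 ε' h' y⟩
  · exact ⟨x, hE.1 ε h x, hx⟩

lemma symmetrize_coarse {X : Type*} {E : Set (Set (X × X))} (hE : IsCoarseStructure E)
    {ε : Set (X × X)} (h : ε ∈ E) :
    ε ∪ {q : X × X | (q.2, q.1) ∈ ε} ∈ E ∧
      (∀ q : X × X, q ∈ ε ∪ {q : X × X | (q.2, q.1) ∈ ε} ↔
        (q.2, q.1) ∈ ε ∪ {q : X × X | (q.2, q.1) ∈ ε}) := by
  refine ⟨union_mem_coarse hE h (hE.2.2.1 ε h), fun q => ?_⟩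
  constructor <;> rintro (hq | hq) <;> [exact Or.inr hq; exact Or.inl hq;
    exact Or.inr hq; exact Or.inl hq]

/-- The basic sets `Y_{n,ε} + {0, z, …, (p-1)z}`. -/
def Sset {X : Type*} (p : ℕ) (z : X) (n : ℕ) (ε : Set (X × X)) : Set (X →₀ ZMod p) :=
  {a | ∃ b ∈ nSumset (Yset p ε) n, ∃ i : ZMod p,
    a = b + i • Finsupp.single z (1 : ZMod p)}

lemma zero_mem_Yset {X : Type*} (p : ℕ) {ε : Set (X × X)} (z : X) (h : (z, z) ∈ ε) :
    (0 : X →₀ ZMod p) ∈ Yset p ε := ⟨(z, z), h, by simp⟩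

lemma Sset_mono {X : Type*} (p : ℕ) (z : X) {n n' : ℕ} {ε ε' : Set (X × X)}
    (hεε : ε ⊆ ε') (hzz : (z, z) ∈ ε') (hnn : n ≤ n') :
    Sset p z n ε ⊆ Sset p z n' ε' := by
  rintro a ⟨b, hb, i, rfl⟩
  obtain ⟨k, rfl⟩ := Nat.exists_eq_add_of_le hnn
  refine ⟨b, ?_, i, rfl⟩
  have hb' : b ∈ nSumset (Yset p ε') n := nSumset_mono' (by
    rintro x ⟨q, hq, rfl⟩; exact ⟨q, hεε hq, rfl⟩) n hb
  have := add_mem_nSumset' hb' (zero_mem_nSumset' (zero_mem_Yset p z hzz) k)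
  simpa using this

lemma smul_diff_mem {X : Type*} (p : ℕ) [Fact p.Prime] {ε : Set (X × X)} {x z : X}
    (h : (x, z) ∈ ε) (c : ZMod p) :
    c • (Finsupp.single x (1 : ZMod p) - Finsupp.single z (1 : ZMod p)) ∈
      nSumset (Yset p ε) c.val := by
  have hv : (Finsupp.single x (1 : ZMod p) - Finsupp.single z (1 : ZMod p)) ∈ Yset p ε :=
    ⟨(x, z), h, rfl⟩
  have : c • (Finsupp.single x (1 : ZMod p) - Finsupp.single z (1 : ZMod p)) =
      c.val • (Finsupp.single x (1 : ZMod p) - Finsupp.single z (1 : ZMod p)) := by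
    rw [← Nat.cast_smul_eq_nsmul (ZMod p), ZMod.natCast_val, ZMod.cast_id]
  rw [this]
  exact smul_mem_nSumset' hv _

/-- Every single element lies in some basic set. -/
lemma mem_some_Sset {X : Type*} (p : ℕ) [Fact p.Prime] {E : Set (Set (X × X))}
    (hE : IsCoarseStructure E) (hconn : IsConnectedCoarse E) (z : X) (a : X →₀ ZMod p) :
    ∃ n : ℕ, ∃ ε ∈ E, (∀ q : X × X, q ∈ ε ↔ (q.2, q.1) ∈ ε) ∧ a ∈ Sset p z n ε := by
  induction a using Finsupp.induction with
  | zero =>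
    obtain ⟨ε, hε, _⟩ := hconn z z
    obtain ⟨hδ, hδsym⟩ := symmetrize_coarse hE hε
    exact ⟨0, _, hδ, hδsym, ⟨0, ⟨fun i => 0, fun i => i.elim0, by simp⟩, 0, by simp⟩⟩
  | single_add x c f hxf hc ih =>
    obtain ⟨n, ε, hε, hsym, b, hb, i, hfb⟩ := ih
    obtain ⟨η, hη, hxz⟩ := hconn x z
    set δ := (ε ∪ η) ∪ {q : X × X | (q.2, q.1) ∈ ε ∪ η} with hδdef
    obtain ⟨hδ, hδsym⟩ := symmetrize_coarse hE (union_mem_coarse hE hε hη)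
    refine ⟨c.val + n, δ, hδ, hδsym, ?_⟩
    have hxzδ : (x, z) ∈ δ := Or.inl (Or.inr hxz)
    have hbδ : b ∈ nSumset (Yset p δ) n := nSumset_mono' (by
      rintro y ⟨q, hq, rfl⟩; exact ⟨q, Or.inl (Or.inl hq), rfl⟩) n hb
    refine ⟨c • (Finsupp.single x (1 : ZMod p) - Finsupp.single z (1 : ZMod p)) + b,
      add_mem_nSumset' (smul_diff_mem p hxzδ c) hbδ, c + i, ?_⟩
    have hsx : Finsupp.single x c = c • Finsupp.single x (1 : ZMod p) := by
      rw [Finsupp.smul_single, smul_eq_mul, mul_one]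
    rw [hfb, hsx]
    module

/-- For a connected coarse space `(X, E)` and `z ∈ X`, the sets
`Y_{n,ε} + {0, z, 2z, …, (p−1)z}` (for `n < ω`, symmetric `ε ∈ E`) form a base for a
group ideal on `A(X)`. -/
theorem base_group_ideal_on_freeAbelian {X : Type*} (p : ℕ) [Fact p.Prime]
    (E : Set (Set (X × X))) (hE : IsCoarseStructure E) (hconn : IsConnectedCoarse E)
    (z : X) :
    IsAddGroupIdeal {A : Set (X →₀ ZMod p) |
      ∃ n : ℕ, ∃ ε ∈ E, (∀ q : X × X, q ∈ ε ↔ (q.2, q.1) ∈ ε) ∧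
        A ⊆ {a | ∃ b ∈ nSumset (Yset p ε) n, ∃ i : ZMod p,
          a = b + i • Finsupp.single z (1 : ZMod p)}} := by
  set I : Set (Set (X →₀ ZMod p)) := {A : Set (X →₀ ZMod p) |
      ∃ n : ℕ, ∃ ε ∈ E, (∀ q : X × X, q ∈ ε ↔ (q.2, q.1) ∈ ε) ∧ A ⊆ Sset p z n ε} with hI
  show IsAddGroupIdeal I
  have hsub : ∀ B ∈ I, ∀ C ⊆ B, C ∈ I := by
    rintro B ⟨n, ε, hε, hsym, hB⟩ C hCB
    exact ⟨n, ε, hε, hsym, hCB.trans hB⟩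
  have hunion : ∀ B ∈ I, ∀ C ∈ I, B ∪ C ∈ I := by
    rintro B ⟨n, ε, hε, hsym, hB⟩ C ⟨m, ε', hε', hsym', hC⟩
    have hδ := union_mem_coarse hE hε hε'
    have hδsym : ∀ q : X × X, q ∈ ε ∪ ε' ↔ (q.2, q.1) ∈ ε ∪ ε' := by
      intro q
      constructor <;> rintro (hq | hq)
      · exact Or.inl ((hsym q).1 hq)
      · exact Or.inr ((hsym' q).1 hq)
      · exact Or.inl ((hsym q).2 hq)
      · exact Or.inr ((hsym' q).2 hq)
    have hzz : (z, z) ∈ ε ∪ ε' := Or.inl (hE.1 ε hε z)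
    refine ⟨max n m, ε ∪ ε', hδ, hδsym, Set.union_subset ?_ ?_⟩
    · exact hB.trans (Sset_mono p z Set.subset_union_left hzz (le_max_left n m))
    · exact hC.trans (Sset_mono p z Set.subset_union_right hzz (le_max_right n m))
  refine ⟨hsub, hunion, ?_, ?_⟩
  · -- finite sets
    intro B hB
    refine Set.Finite.induction_on (motive := fun s _ => s ∈ I) B hB ?_ ?_
    · obtain ⟨ε, hε, _⟩ := hconn z z
      obtain ⟨hδ, hδsym⟩ := symmetrize_coarse hE hε
      exact ⟨0, _, hδ, hδsym, by simp⟩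
    · intro a s _ _ ih
      have h1 : {a} ∈ I := by
        obtain ⟨n, ε, hε, hsym, haS⟩ := mem_some_Sset p hE hconn z a
        exact ⟨n, ε, hε, hsym, by simpa using haS⟩
      have := hunion _ h1 _ ih
      rw [Set.insert_eq]; exact this
  · -- differences
    rintro B ⟨n, ε, hε, hsym, hB⟩ C ⟨m, ε', hε', hsym', hC⟩
    have hδ := union_mem_coarse hE hε hε'
    have hδsym : ∀ q : X × X, q ∈ ε ∪ ε' ↔ (q.2, q.1) ∈ ε ∪ ε' := by
      intro q
      constructor <;> rintro (hq | hq)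
      · exact Or.inl ((hsym q).1 hq)
      · exact Or.inr ((hsym' q).1 hq)
      · exact Or.inl ((hsym q).2 hq)
      · exact Or.inr ((hsym' q).2 hq)
    refine ⟨n + m, ε ∪ ε', hδ, hδsym, ?_⟩
    rintro a ⟨b, hb, c, hc, rfl⟩
    obtain ⟨b', hb', i, rfl⟩ := hB hb
    obtain ⟨c', hc', j, rfl⟩ := hC hc
    have hbδ : b' ∈ nSumset (Yset p (ε ∪ ε')) n := nSumset_mono' (by
      rintro y ⟨q, hq, rfl⟩; exact ⟨q, Or.inl hq, rfl⟩) n hb'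
    have hcδ : c' ∈ nSumset (Yset p (ε ∪ ε')) m := nSumset_mono' (by
      rintro y ⟨q, hq, rfl⟩; exact ⟨q, Or.inr hq, rfl⟩) m hc'
    have hneg : -c' ∈ nSumset (Yset p (ε ∪ ε')) m := by
      refine neg_mem_nSumset' ?_ hcδ
      rintro y ⟨q, hq, rfl⟩
      exact ⟨(q.2, q.1), (hδsym q).1 hq, by simp [neg_sub]⟩
    refine ⟨b' + -c', add_mem_nSumset' hbδ hneg, i - j, ?_⟩
    module
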